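/- Equip L_1(0,1) (complex-valued integrable functions on (0,1) with Lebesgue measure) with the norm ‖f‖ = ∫_0^{1/2} μ(s; f) ds, where μ(·; f) is the decreasing rearrangement of f. Let a : (0,1) → [0,∞) be measurable and let σ : (0,1) → (0,1) be a Borel bijection with Borel inverse such that preimages under σ of Lebesgue-null sets are null (so that f ↦ f ∘ σ is well defined on a.e.-equivalence classes). If the map T defined by (Tf)(t) = a(t)·f(σ(t)) maps L_1(0,1) onto L_1(0,1) and satisfies ‖Tf‖ = ‖f‖ for all f ∈ L_1(0,1), then a = 1 almost everywhere. -/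

import Mathlib

open MeasureTheory Filter Set Topology
open scoped ENNReal

noncomputable section

namespace RenormedL1

/-- Lebesgue measure on the interval `(0,1)`. -/
def m01 : Measure ℝ := volume.restrict (Set.Ioo 0 1)

/-- The distribution function `s ↦ m{ |f| > s }` of a function on `(0,1)`. -/
def distrib01 (f : ℝ → ℂ) (s : ℝ) : ℝ≥0∞ :=
  m01 {x | s < ‖f x‖}

/-- The decreasing rearrangement `μ(t; f) = inf{ s ≥ 0 : m{|f| > s} ≤ t }`. -/
def rearr01 (f : ℝ → ℂ) (t : ℝ) : ℝ :=
  sInf {s : ℝ | 0 ≤ s ∧ distrib01 f s ≤ ENNReal.ofReal t}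

/-- The symmetric norm `‖f‖ = ∫_0^{1/2} μ(s; f) ds` on `L_1(0,1)`. -/
def nrmHalf (f : ℝ → ℂ) : ℝ :=
  ∫ s in Set.Ioo (0 : ℝ) (1 / 2), rearr01 f s

/-! ### Auxiliary lemmas -/

lemma m01_univ : m01 Set.univ = 1 := by
  simp [m01, Real.volume_Ioo]

lemma m01_le_one (s : Set ℝ) : m01 s ≤ 1 := by
  rw [← m01_univ]; exact measure_mono (subset_univ s)

instance : IsProbabilityMeasure m01 := ⟨m01_univ⟩

lemma distrib01_anti (f : ℝ → ℂ) : Antitone (distrib01 f) := by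
  intro s₁ s₂ h
  exact measure_mono (fun x hx => lt_of_le_of_lt h hx)

lemma distrib01_le_one (f : ℝ → ℂ) (s : ℝ) : distrib01 f s ≤ 1 := m01_le_one _

lemma distrib01_ne_top (f : ℝ → ℂ) (s : ℝ) : distrib01 f s ≠ ∞ :=
  (lt_of_le_of_lt (distrib01_le_one f s) ENNReal.one_lt_top).ne

lemma distrib01_meas_set (f : ℝ → ℂ) (hf : Measurable f) (s : ℝ) :
    MeasurableSet {x : ℝ | s < ‖f x‖} :=
  measurableSet_lt measurable_const (continuous_norm.measurable.comp hf)

lemma distrib01_measurable (f : ℝ → ℂ) : Measurable (distrib01 f) :=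
  (distrib01_anti f).measurable

lemma distrib01_iInf (f : ℝ → ℂ) (hf : Measurable f) :
    ⨅ n : ℕ, distrib01 f n = 0 := by
  have hanti : Antitone (fun n : ℕ => {x : ℝ | (n : ℝ) < ‖f x‖}) := by
    intro m n hmn x hx
    simp only [mem_setOf_eq] at hx ⊢
    exact lt_of_le_of_lt (Nat.cast_le.mpr hmn) hx
  have hempty : (⋂ n : ℕ, {x : ℝ | (n : ℝ) < ‖f x‖}) = ∅ := by
    ext x
    simp only [mem_iInter, mem_setOf_eq, mem_empty_iff_false, iff_false, not_forall, not_lt]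
    obtain ⟨n, hn⟩ := exists_nat_gt (‖f x‖)
    exact ⟨n, hn.le⟩
  have := hanti.measure_iInter (μ := m01)
    (fun n => (distrib01_meas_set f hf n).nullMeasurableSet)
    ⟨0, distrib01_ne_top f _⟩
  rw [hempty, measure_empty] at this
  exact this.symm

lemma distrib01_iSup (f : ℝ → ℂ) (hf : Measurable f) (s : ℝ) :
    distrib01 f s = ⨆ n : ℕ, distrib01 f (s + 1 / (n + 1)) := by
  have hmono : Monotone (fun n : ℕ => {x : ℝ | s + 1 / ((n : ℝ) + 1) < ‖f x‖}) := by
    intro m n hmn x hx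
    simp only [mem_setOf_eq] at hx ⊢
    have h1 : 1 / ((n : ℝ) + 1) ≤ 1 / ((m : ℝ) + 1) := by
      apply one_div_le_one_div_of_le
      · positivity
      · have : (m : ℝ) ≤ (n : ℝ) := Nat.cast_le.mpr hmn
        linarith
    linarith
  have hset : {x : ℝ | s < ‖f x‖}
      = ⋃ n : ℕ, {x : ℝ | s + 1 / ((n : ℝ) + 1) < ‖f x‖} := by
    ext x
    simp only [mem_setOf_eq, mem_iUnion]
    constructor
    · intro hx
      obtain ⟨n, hn⟩ := exists_nat_one_div_lt (sub_pos.2 hx)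
      exact ⟨n, by linarith⟩
    · rintro ⟨n, hn⟩
      have : (0 : ℝ) < 1 / ((n : ℝ) + 1) := by positivity
      linarith
  rw [distrib01, hset, hmono.directed_le.measure_iUnion]
  rfl

lemma rearr01_set_nonempty (f : ℝ → ℂ) (hf : Measurable f) {t : ℝ} (ht : 0 < t) :
    {s : ℝ | 0 ≤ s ∧ distrib01 f s ≤ ENNReal.ofReal t}.Nonempty := by
  have h0 : (0 : ℝ≥0∞) < ENNReal.ofReal t := ENNReal.ofReal_pos.2 ht
  have hinf : ⨅ n : ℕ, distrib01 f n = 0 := distrib01_iInf f hf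
  have : ⨅ n : ℕ, distrib01 f n < ENNReal.ofReal t := by rw [hinf]; exact h0
  obtain ⟨n, hn⟩ := iInf_lt_iff.1 this
  exact ⟨n, Nat.cast_nonneg n, hn.le⟩

lemma rearr01_nonneg (f : ℝ → ℂ) (t : ℝ) : 0 ≤ rearr01 f t :=
  Real.sInf_nonneg (fun _ hx => hx.1)

lemma lt_rearr01_iff (f : ℝ → ℂ) (hf : Measurable f) {t s : ℝ} (ht : 0 < t) (hs : 0 ≤ s) :
    s < rearr01 f t ↔ ENNReal.ofReal t < distrib01 f s := by
  have hbdd : BddBelow {s' : ℝ | 0 ≤ s' ∧ distrib01 f s' ≤ ENNReal.ofReal t} :=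
    ⟨0, fun _ hx => hx.1⟩
  have hne := rearr01_set_nonempty f hf ht
  constructor
  · intro h
    by_contra hc
    push_neg at hc
    exact absurd (csInf_le hbdd ⟨hs, hc⟩) (not_le.2 h)
  · intro h
    have hsup := distrib01_iSup f hf s
    rw [hsup] at h
    obtain ⟨n, hn⟩ := lt_iSup_iff.1 h
    have hkey : s + 1 / ((n : ℝ) + 1) ≤ rearr01 f t := by
      apply le_csInf hne
      intro b hb
      by_contra hbc
      push_neg at hbc
      have : ENNReal.ofReal t < distrib01 f b :=
        lt_of_lt_of_le hn (distrib01_anti f hbc.le)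
      exact absurd hb.2 (not_le.2 this)
    have hpos : (0 : ℝ) < 1 / ((n : ℝ) + 1) := by positivity
    linarith

lemma rearr01_antiOn (f : ℝ → ℂ) (hf : Measurable f) :
    AntitoneOn (rearr01 f) (Set.Ioi 0) := by
  intro t₁ ht₁ t₂ _ h
  apply csInf_le_csInf ⟨0, fun _ hx => hx.1⟩ (rearr01_set_nonempty f hf ht₁)
  intro x hx
  exact ⟨hx.1, hx.2.trans (ENNReal.ofReal_le_ofReal h)⟩

lemma min_ofReal_eq (d : ℝ≥0∞) (hd : d ≠ ∞) :
    ENNReal.ofReal (min (1 / 2) d.toReal) = min d (ENNReal.ofReal (1 / 2)) := by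
  rcases le_total d.toReal (1 / 2) with h | h
  · rw [min_eq_right h, ENNReal.ofReal_toReal hd, min_eq_left]
    rw [← ENNReal.ofReal_toReal hd]
    exact ENNReal.ofReal_le_ofReal h
  · rw [min_eq_left h, eq_comm, min_eq_right]
    rw [← ENNReal.ofReal_toReal hd]
    exact ENNReal.ofReal_le_ofReal h

/-- The key Tonelli identity: `∫_0^{1/2} μ(t;f) dt = ∫_0^∞ min(d_f(s), 1/2) ds`. -/
lemma lintegral_rearr01 (f : ℝ → ℂ) (hf : Measurable f) :
    ∫⁻ t in Set.Ioo (0 : ℝ) (1 / 2), ENNReal.ofReal (rearr01 f t)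
      = ∫⁻ s in Set.Ioi (0 : ℝ), min (distrib01 f s) (ENNReal.ofReal (1 / 2)) := by
  set d := distrib01 f with hd
  have hdmeas : Measurable d := distrib01_measurable f
  set A : Set (ℝ × ℝ) := {p : ℝ × ℝ | ENNReal.ofReal p.1 < d p.2} with hA
  have hAmeas : MeasurableSet A :=
    measurableSet_lt (ENNReal.measurable_ofReal.comp measurable_fst)
      (hdmeas.comp measurable_snd)
  have key : ∀ t ∈ Set.Ioo (0 : ℝ) (1 / 2),
      ENNReal.ofReal (rearr01 f t)
        = ∫⁻ s in Set.Ioi (0 : ℝ), A.indicator (fun _ => (1 : ℝ≥0∞)) (t, s) := by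
    intro t ht
    have hmeasB : MeasurableSet {s : ℝ | (t, s) ∈ A} :=
      measurable_prodMk_left hAmeas
    have hstep : ∫⁻ s in Set.Ioi (0 : ℝ), A.indicator (fun _ => (1 : ℝ≥0∞)) (t, s)
        = ∫⁻ s in Set.Ioi (0 : ℝ), {s : ℝ | (t, s) ∈ A}.indicator (fun _ => (1 : ℝ≥0∞)) s := by
      apply lintegral_congr
      intro s
      by_cases hs : (t, s) ∈ A <;> simp [Set.indicator_apply, hs]
    rw [hstep, lintegral_indicator hmeasB, setLIntegral_one, Measure.restrict_apply hmeasB]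
    have hset : {s : ℝ | (t, s) ∈ A} ∩ Set.Ioi 0 = Set.Ioo 0 (rearr01 f t) := by
      ext s
      simp only [hA, mem_inter_iff, mem_setOf_eq, mem_Ioi, mem_Ioo]
      constructor
      · rintro ⟨h1, h2⟩
        exact ⟨h2, (lt_rearr01_iff f hf ht.1 h2.le).2 h1⟩
      · rintro ⟨h1, h2⟩
        exact ⟨(lt_rearr01_iff f hf ht.1 h1.le).1 h2, h1⟩
    rw [hset, Real.volume_Ioo, sub_zero]
  rw [setLIntegral_congr_fun measurableSet_Ioo key]
  have hswap := lintegral_lintegral_swap (μ := volume.restrict (Set.Ioo (0:ℝ) (1/2)))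
    (ν := volume.restrict (Set.Ioi (0:ℝ)))
    (f := fun t s => A.indicator (fun _ => (1:ℝ≥0∞)) (t, s))
    (Measurable.aemeasurable (by exact measurable_const.indicator hAmeas))
  rw [hswap]
  apply setLIntegral_congr_fun measurableSet_Ioi
  intro s _
  beta_reduce
  have hstep : ∫⁻ t in Set.Ioo (0 : ℝ) (1 / 2), A.indicator (fun _ => (1 : ℝ≥0∞)) (t, s)
      = ∫⁻ t in Set.Ioo (0 : ℝ) (1 / 2),
          {t : ℝ | (t, s) ∈ A}.indicator (fun _ => (1 : ℝ≥0∞)) t := by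
    apply lintegral_congr
    intro t
    by_cases ht : (t, s) ∈ A <;> simp [Set.indicator_apply, ht]
  have hmeasB : MeasurableSet {t : ℝ | (t, s) ∈ A} := by
    have : {t : ℝ | (t, s) ∈ A} = (fun t : ℝ => (t, s)) ⁻¹' A := rfl
    rw [this]
    exact hAmeas.preimage (measurable_id.prodMk measurable_const)
  rw [hstep, lintegral_indicator hmeasB, setLIntegral_one, Measure.restrict_apply hmeasB]
  have hset : {t : ℝ | (t, s) ∈ A} ∩ Set.Ioo 0 (1 / 2)
      = Set.Ioo 0 (min (1 / 2) (d s).toReal) := by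
    ext t
    simp only [hA, mem_inter_iff, mem_setOf_eq, mem_Ioo, lt_min_iff]
    constructor
    · rintro ⟨h1, h2, h3⟩
      exact ⟨h2, h3, (ENNReal.ofReal_lt_iff_lt_toReal h2.le (distrib01_ne_top f s)).1 h1⟩
    · rintro ⟨h1, h2, h3⟩
      exact ⟨(ENNReal.ofReal_lt_iff_lt_toReal h1.le (distrib01_ne_top f s)).2 h3, h1, h2⟩
  rw [hset, Real.volume_Ioo, sub_zero, min_ofReal_eq _ (distrib01_ne_top f s)]

lemma nrmHalf_eq (f : ℝ → ℂ) (hf : Measurable f) :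
    nrmHalf f
      = (∫⁻ s in Set.Ioi (0 : ℝ), min (distrib01 f s) (ENNReal.ofReal (1 / 2))).toReal := by
  rw [← lintegral_rearr01 f hf, nrmHalf,
    integral_eq_lintegral_of_nonneg_ae (ae_of_all _ fun t => rearr01_nonneg f t)
      ((aemeasurable_restrict_of_antitoneOn measurableSet_Ioo
        ((rearr01_antiOn f hf).mono (fun x hx => hx.1))).aestronglyMeasurable)]

lemma layercake01 (f : ℝ → ℂ) (hf : Measurable f) :
    ∫⁻ s in Set.Ioi (0 : ℝ), distrib01 f s
      = ∫⁻ x, ENNReal.ofReal (‖f x‖) ∂m01 := by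
  rw [lintegral_eq_lintegral_meas_lt m01 (ae_of_all _ fun x => norm_nonneg (f x))
    ((continuous_norm.measurable.comp hf).aemeasurable)]
  rfl

lemma nrmHalf_small (f : ℝ → ℂ) (hf : Measurable f)
    (h : distrib01 f 0 ≤ ENNReal.ofReal (1 / 2)) :
    nrmHalf f = (∫⁻ x, ENNReal.ofReal (‖f x‖) ∂m01).toReal := by
  rw [nrmHalf_eq f hf, ← layercake01 f hf]
  congr 1
  refine setLIntegral_congr_fun measurableSet_Ioi (fun s hs => ?_)
  exact min_eq_left ((distrib01_anti f (le_of_lt hs)).trans h)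

lemma nrmHalf_one : nrmHalf (fun _ => (1 : ℂ)) = 1 / 2 := by
  rw [nrmHalf_eq _ measurable_const]
  have hcongr : ∀ s ∈ Set.Ioi (0 : ℝ),
      min (distrib01 (fun _ => (1 : ℂ)) s) (ENNReal.ofReal (1 / 2))
        = (Set.Iio (1 : ℝ)).indicator (fun _ => ENNReal.ofReal (1 / 2)) s := by
    intro s _
    by_cases h : s < 1
    · have hd : distrib01 (fun _ => (1 : ℂ)) s = 1 := by
        have hset : {x : ℝ | s < ‖(1 : ℂ)‖} = Set.univ := by
          apply eq_univ_of_forall; intro x; simpa using h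
        rw [distrib01, hset, m01_univ]
      rw [hd, Set.indicator_of_mem (mem_Iio.2 h),
        min_eq_right (ENNReal.ofReal_le_one.2 (by norm_num))]
    · have hd : distrib01 (fun _ => (1 : ℂ)) s = 0 := by
        have hset : {x : ℝ | s < ‖(1 : ℂ)‖} = ∅ := by
          ext x; simp only [norm_one, mem_setOf_eq, mem_empty_iff_false, iff_false, not_lt]
          linarith [not_lt.1 h]
        rw [distrib01, hset, measure_empty]
      rw [hd, Set.indicator_of_notMem (fun hmem => h (mem_Iio.1 hmem)),
        min_eq_left zero_le]
  rw [setLIntegral_congr_fun measurableSet_Ioi hcongr,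
    lintegral_indicator measurableSet_Iio, setLIntegral_const,
    Measure.restrict_apply measurableSet_Iio]
  have : Set.Iio (1 : ℝ) ∩ Set.Ioi 0 = Set.Ioo 0 1 := by
    ext x; simp [mem_Ioo, and_comm]
  rw [this, Real.volume_Ioo]
  simp [ENNReal.toReal_mul, ENNReal.toReal_ofReal]

/-- If a weighted composition operator `(Tf)(t) = a(t)·f(σ(t))` with a
nonnegative measurable weight `a` and a null-preserving Borel bijection `σ` of `(0,1)` maps
`L_1(0,1)` onto itself and is an isometry for the norm `‖f‖ = ∫_0^{1/2} μ(s;f) ds`, then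
`a = 1` almost everywhere. -/
theorem weight_eq_one_of_isometry
    (a : ℝ → ℝ) (ha : Measurable a) (ha0 : ∀ t, 0 ≤ a t)
    (σ : ℝ → ℝ) (hσmeas : Measurable σ)
    (hbij : Set.BijOn σ (Set.Ioo 0 1) (Set.Ioo 0 1))
    (hinv : ∃ τ : ℝ → ℝ, Measurable τ ∧ Set.InvOn τ σ (Set.Ioo 0 1) (Set.Ioo 0 1))
    (hnull : ∀ N : Set ℝ, N ⊆ Set.Ioo 0 1 → MeasurableSet N → volume N = 0 →
      volume (σ ⁻¹' N ∩ Set.Ioo 0 1) = 0)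
    (hmaps : ∀ f : ℝ → ℂ, Integrable f m01 →
      Integrable (fun t => (a t : ℂ) * f (σ t)) m01)
    (hsurj : ∀ g : ℝ → ℂ, Integrable g m01 → ∃ f : ℝ → ℂ, Integrable f m01 ∧
      (fun t => (a t : ℂ) * f (σ t)) =ᵐ[m01] g)
    (hiso : ∀ f : ℝ → ℂ, Integrable f m01 →
      nrmHalf (fun t => (a t : ℂ) * f (σ t)) = nrmHalf f) :
    ∀ᵐ t ∂m01, a t = 1 := by
  classical
  set acplx : ℝ → ℂ := fun t => ((a t : ℝ) : ℂ) with hacplx_def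
  have hacplx : Measurable acplx := Complex.measurable_ofReal.comp ha
  have habs : ∀ x, ‖acplx x‖ = a x := fun x => by
    rw [hacplx_def]
    simp [Complex.norm_real, Real.norm_eq_abs, abs_of_nonneg (ha0 x)]
  -- integrability of the weight
  have haInt : Integrable acplx m01 := by
    have := hmaps (fun _ => (1 : ℂ)) (integrable_const 1)
    simpa [hacplx_def] using this
  have hItop : ∫⁻ x, ENNReal.ofReal (a x) ∂m01 ≠ ∞ := by
    have h3 : (fun x => ENNReal.ofReal (a x)) = fun x => ‖acplx x‖ₑ := by
      funext x
      rw [← ofReal_norm_eq_enorm]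
      congr 1
      rw [habs x]
    rw [h3]
    exact haInt.2.ne
  -- the image measure of m01 under σ
  set βm : Measure ℝ := Measure.map σ m01 with hβm_def
  have hβm_apply : ∀ E : Set ℝ, MeasurableSet E → βm E = volume (σ ⁻¹' E ∩ Set.Ioo 0 1) := by
    intro E hE
    rw [hβm_def, Measure.map_apply hσmeas hE, m01, Measure.restrict_apply (hσmeas hE)]
  have hβm_fin : IsFiniteMeasure βm := by
    constructor
    rw [hβm_def, Measure.map_apply hσmeas MeasurableSet.univ]
    simpa using m01_le_one _ |>.trans_lt ENNReal.one_lt_top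
  have hβac : βm ≪ volume := by
    apply Measure.AbsolutelyContinuous.mk
    intro N hN hN0
    rw [hβm_apply N hN]
    have hsub : σ ⁻¹' N ∩ Set.Ioo 0 1 ⊆ σ ⁻¹' (N ∩ Set.Ioo 0 1) ∩ Set.Ioo 0 1 := by
      rintro t ⟨ht1, ht2⟩
      exact ⟨⟨ht1, hbij.mapsTo ht2⟩, ht2⟩
    refine measure_mono_null hsub ?_
    exact hnull (N ∩ Set.Ioo 0 1) inter_subset_right (hN.inter measurableSet_Ioo)
      (measure_mono_null inter_subset_left hN0)
  -- absolute continuity in ε-δ form, with ε = 1/2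
  have hrn_tot : ∫⁻ x, βm.rnDeriv volume x ∂volume ≠ ∞ := by
    rw [Measure.lintegral_rnDeriv hβac]
    haveI := hβm_fin
    exact measure_ne_top βm _
  obtain ⟨δ, hδpos, hδ⟩ := exists_pos_setLIntegral_lt_of_measure_lt (μ := volume) hrn_tot
    (ε := ENNReal.ofReal (1 / 2)) (by simp)
  -- choose a fine partition
  set δ' : ℝ≥0∞ := min δ 1 with hδ'_def
  have hδ'ne0 : δ' ≠ 0 := (lt_min hδpos zero_lt_one).ne'
  have hδ'netop : δ' ≠ ∞ := ((min_le_right δ 1).trans_lt ENNReal.one_lt_top).ne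
  have hδ'pos : (0:ℝ) < δ'.toReal := ENNReal.toReal_pos hδ'ne0 hδ'netop
  obtain ⟨n₀, hn₀⟩ := exists_nat_one_div_lt (lt_min_iff.2 ⟨hδ'pos, by norm_num⟩ :
    (0:ℝ) < min δ'.toReal (1/2))
  set M : ℝ := (n₀ : ℝ) + 1 with hM_def
  have hMpos : (0 : ℝ) < M := by positivity
  have hlen_lt_δ : ENNReal.ofReal (1 / M) < δ := by
    have h1 : (1 : ℝ) / M < δ'.toReal := lt_of_lt_of_le hn₀ (min_le_left _ _)
    calc ENNReal.ofReal (1 / M) < ENNReal.ofReal δ'.toReal :=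
          (ENNReal.ofReal_lt_ofReal_iff hδ'pos).2 h1
      _ ≤ δ' := ENNReal.ofReal_toReal_le
      _ ≤ δ := min_le_left _ _
  have hlen_le_half : (1 : ℝ) / M ≤ 1 / 2 := (lt_of_lt_of_le hn₀ (min_le_right _ _)).le
  -- the partition pieces
  set E : ℕ → Set ℝ := fun k => Set.Ico ((k : ℝ) / M) (((k : ℝ) + 1) / M) ∩ Set.Ioo 0 1
    with hE_def
  have hEmeas : ∀ k, MeasurableSet (E k) := fun k =>
    measurableSet_Ico.inter measurableSet_Ioo
  have hEvol : ∀ k, volume (E k) ≤ ENNReal.ofReal (1 / M) := by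
    intro k
    calc volume (E k) ≤ volume (Set.Ico ((k : ℝ) / M) (((k : ℝ) + 1) / M)) :=
          measure_mono inter_subset_left
      _ = ENNReal.ofReal (((k : ℝ) + 1) / M - (k : ℝ) / M) := Real.volume_Ico
      _ = ENNReal.ofReal (1 / M) := by congr 1; field_simp; ring
  have hEdisj : Pairwise (Function.onFun Disjoint E) := by
    intro i j hij
    apply Disjoint.mono inter_subset_left inter_subset_left
    rw [Set.Ico_disjoint_Ico]
    rcases hij.lt_or_gt with h | h
    · have : (i : ℝ) + 1 ≤ (j : ℝ) := by exact_mod_cast h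
      calc min (((i:ℝ)+1)/M) (((j:ℝ)+1)/M) ≤ ((i:ℝ)+1)/M := min_le_left _ _
        _ ≤ (j:ℝ)/M := (div_le_div_iff_of_pos_right hMpos).2 this
        _ ≤ max ((i:ℝ)/M) ((j:ℝ)/M) := le_max_right _ _
    · have : (j : ℝ) + 1 ≤ (i : ℝ) := by exact_mod_cast h
      calc min (((i:ℝ)+1)/M) (((j:ℝ)+1)/M) ≤ ((j:ℝ)+1)/M := min_le_right _ _
        _ ≤ (i:ℝ)/M := (div_le_div_iff_of_pos_right hMpos).2 this
        _ ≤ max ((i:ℝ)/M) ((j:ℝ)/M) := le_max_left _ _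
  have hEunion : (⋃ k : ℕ, E k) = Set.Ioo (0 : ℝ) 1 := by
    apply subset_antisymm
    · exact iUnion_subset fun k => inter_subset_right
    · intro x hx
      refine mem_iUnion.2 ⟨⌊x * M⌋₊, ⟨?_, ?_⟩, hx⟩
      · rw [div_le_iff₀ hMpos]
        exact Nat.floor_le (le_of_lt (mul_pos hx.1 hMpos))
      · rw [lt_div_iff₀ hMpos]
        exact_mod_cast Nat.lt_floor_add_one (x * M)
  -- the key identity on each partition piece
  have hstar : ∀ k : ℕ,
      ∫⁻ x in σ ⁻¹' (E k) ∩ Set.Ioo 0 1, ENNReal.ofReal (a x) ∂volume = m01 (E k) := by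
    intro k
    set f : ℝ → ℂ := (E k).indicator (fun _ => (1 : ℂ)) with hf_def
    have hfmeas : Measurable f := measurable_const.indicator (hEmeas k)
    have hfInt : Integrable f m01 := (integrable_const (1 : ℂ)).indicator (hEmeas k)
    -- the norm of f
    have hm01Ek_le : m01 (E k) ≤ ENNReal.ofReal (1 / 2) := by
      calc m01 (E k) ≤ volume (E k) := by
            rw [m01, Measure.restrict_apply (hEmeas k)]
            exact measure_mono inter_subset_left
        _ ≤ ENNReal.ofReal (1 / M) := hEvol k
        _ ≤ ENNReal.ofReal (1 / 2) := ENNReal.ofReal_le_ofReal hlen_le_half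
    have hdist_f : distrib01 f 0 = m01 (E k) := by
      rw [distrib01]
      congr 1
      ext x
      by_cases hx : x ∈ E k <;> simp [hf_def, Set.indicator_apply, hx]
    have hintf : ∫⁻ x, ENNReal.ofReal (‖f x‖) ∂m01 = m01 (E k) := by
      have hpt : ∀ x, ENNReal.ofReal (‖f x‖)
          = (E k).indicator (fun _ => (1 : ℝ≥0∞)) x := by
        intro x
        by_cases hx : x ∈ E k <;> simp [hf_def, Set.indicator_apply, hx]
      rw [lintegral_congr hpt, lintegral_indicator (hEmeas k), setLIntegral_one]
    have hnrm_f : nrmHalf f = (m01 (E k)).toReal := by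
      rw [nrmHalf_small f hfmeas (hdist_f ▸ hm01Ek_le), hintf]
    -- the norm of Tf
    set g : ℝ → ℂ := fun t => (a t : ℂ) * f (σ t) with hg_def
    have hgmeas : Measurable g :=
      (Complex.measurable_ofReal.comp ha).mul (hfmeas.comp hσmeas)
    have hβEk : βm (E k) < ENNReal.ofReal (1 / 2) := by
      rw [← Measure.setLIntegral_rnDeriv hβac (E k)]
      exact hδ (E k) (lt_of_le_of_lt (hEvol k) hlen_lt_δ)
    have hdist_g : distrib01 g 0 ≤ ENNReal.ofReal (1 / 2) := by
      have hsub : {x : ℝ | (0:ℝ) < ‖g x‖} ⊆ σ ⁻¹' (E k) := by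
        intro x hx
        by_contra hc
        have hc' : σ x ∉ E k := fun h => hc (Set.mem_preimage.2 h)
        simp only [mem_setOf_eq, hg_def, hf_def] at hx
        rw [Set.indicator_of_notMem hc', mul_zero] at hx
        simp at hx
      calc distrib01 g 0 ≤ m01 (σ ⁻¹' (E k)) := measure_mono hsub
        _ = volume (σ ⁻¹' (E k) ∩ Set.Ioo 0 1) := by
            rw [m01, Measure.restrict_apply (hσmeas (hEmeas k))]
        _ = βm (E k) := (hβm_apply (E k) (hEmeas k)).symm
        _ ≤ ENNReal.ofReal (1 / 2) := hβEk.le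
    have hintg : ∫⁻ x, ENNReal.ofReal (‖g x‖) ∂m01
        = ∫⁻ x in σ ⁻¹' (E k) ∩ Set.Ioo 0 1, ENNReal.ofReal (a x) ∂volume := by
      have hpt : ∀ x, ENNReal.ofReal (‖g x‖)
          = (σ ⁻¹' (E k)).indicator (fun x => ENNReal.ofReal (a x)) x := by
        intro x
        by_cases hx : σ x ∈ E k <;>
          simp [hg_def, hf_def, Set.indicator_apply, hx, map_mul, Complex.norm_real, Real.norm_eq_abs,
            abs_of_nonneg (ha0 x)]
      rw [lintegral_congr hpt, lintegral_indicator (hσmeas (hEmeas k)), m01,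
        Measure.restrict_restrict (hσmeas (hEmeas k))]
    have hnrm_g : nrmHalf g
        = (∫⁻ x in σ ⁻¹' (E k) ∩ Set.Ioo 0 1, ENNReal.ofReal (a x) ∂volume).toReal := by
      rw [nrmHalf_small g hgmeas hdist_g, hintg]
    -- combine with the isometry property
    have hiso_k := hiso f hfInt
    rw [hnrm_f, ← hg_def, hnrm_g] at hiso_k
    have hν_ne : ∫⁻ x in σ ⁻¹' (E k) ∩ Set.Ioo 0 1, ENNReal.ofReal (a x) ∂volume ≠ ∞ := by
      refine ne_top_of_le_ne_top hItop ?_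
      rw [m01]
      exact lintegral_mono_set inter_subset_right
    have hm_ne : m01 (E k) ≠ ∞ := (lt_of_le_of_lt (m01_le_one _) ENNReal.one_lt_top).ne
    exact (ENNReal.toReal_eq_toReal_iff' hν_ne hm_ne).1 hiso_k
  -- summing over the partition: total mass of a is 1
  have hcover : (⋃ k : ℕ, σ ⁻¹' (E k) ∩ Set.Ioo 0 1) = Set.Ioo (0:ℝ) 1 := by
    rw [← iUnion_inter, ← preimage_iUnion, hEunion]
    apply inter_eq_self_of_subset_right
    exact fun x hx => hbij.mapsTo hx
  have hsum7 : ∫⁻ x, ENNReal.ofReal (a x) ∂m01 = 1 := by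
    have hpre_meas : ∀ k : ℕ, MeasurableSet (σ ⁻¹' (E k) ∩ Set.Ioo 0 1) := fun k =>
      (hσmeas (hEmeas k)).inter measurableSet_Ioo
    have hpre_disj : Pairwise (Function.onFun Disjoint
        fun k : ℕ => σ ⁻¹' (E k) ∩ Set.Ioo 0 1) := by
      intro i j hij
      exact Disjoint.mono inter_subset_left inter_subset_left
        (Disjoint.preimage σ (hEdisj hij))
    calc ∫⁻ x, ENNReal.ofReal (a x) ∂m01
        = ∫⁻ x in ⋃ k : ℕ, σ ⁻¹' (E k) ∩ Set.Ioo 0 1, ENNReal.ofReal (a x) ∂volume := by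
          rw [m01, hcover]
      _ = ∑' k : ℕ, ∫⁻ x in σ ⁻¹' (E k) ∩ Set.Ioo 0 1, ENNReal.ofReal (a x) ∂volume :=
          lintegral_iUnion hpre_meas hpre_disj _
      _ = ∑' k : ℕ, m01 (E k) := by
          exact tsum_congr hstar
      _ = m01 (⋃ k : ℕ, E k) := (measure_iUnion hEdisj hEmeas).symm
      _ = 1 := by
          rw [hEunion, m01, Measure.restrict_apply measurableSet_Ioo, inter_self,
            Real.volume_Ioo]
          norm_num
  -- apply the isometry to the constant function 1
  set d : ℝ → ℝ≥0∞ := distrib01 acplx with hd_def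
  have hdmeas : Measurable d := distrib01_measurable acplx
  have hds : ∀ s, d s = m01 {x | s < a x} := by
    intro s
    rw [hd_def, distrib01]
    congr 1
    ext x
    simp [habs x]
  have hJd : ∫⁻ s in Set.Ioi (0:ℝ), d s = 1 := by
    calc ∫⁻ s in Set.Ioi (0:ℝ), d s
        = ∫⁻ x, ENNReal.ofReal (‖acplx x‖) ∂m01 := layercake01 acplx hacplx
      _ = ∫⁻ x, ENNReal.ofReal (a x) ∂m01 := lintegral_congr fun x => by rw [habs x]
      _ = 1 := hsum7
  set u : ℝ → ℝ≥0∞ := fun s => min (d s) (ENNReal.ofReal (1 / 2)) with hu_def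
  have humeas : Measurable u := hdmeas.min measurable_const
  have hule : ∀ s, u s ≤ d s := fun s => min_le_left _ _
  have hiso1 := hiso (fun _ => (1 : ℂ)) (integrable_const 1)
  have hTone : (fun t => (a t : ℂ) * (1 : ℂ)) = acplx := by
    funext t; simp [hacplx_def]
  rw [nrmHalf_one] at hiso1
  have hiso1' : nrmHalf acplx = 1 / 2 := by rw [← hTone]; exact hiso1
  rw [nrmHalf_eq acplx hacplx] at hiso1'
  have hJu_le : ∫⁻ s in Set.Ioi (0:ℝ), u s ≤ 1 := by
    rw [← hJd]
    exact lintegral_mono hule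
  have hJu_ne : ∫⁻ s in Set.Ioi (0:ℝ), u s ≠ ∞ :=
    ne_top_of_le_ne_top ENNReal.one_ne_top hJu_le
  have hJu : ∫⁻ s in Set.Ioi (0:ℝ), u s = ENNReal.ofReal (1 / 2) := by
    apply (ENNReal.toReal_eq_toReal_iff' hJu_ne ENNReal.ofReal_ne_top).1
    rw [ENNReal.toReal_ofReal (by norm_num : (0:ℝ) ≤ 1/2)]
    exact hiso1'
  have h12 : ENNReal.ofReal (1 / 2) + ENNReal.ofReal (1 / 2) = 1 := by
    rw [← ENNReal.ofReal_add (by norm_num) (by norm_num)]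
    norm_num
  -- ∫ (d - u) = 1/2 = ∫ u, and (d - u) ≤ u pointwise, hence  d - u = u a.e.
  have hsub_int : ∫⁻ s in Set.Ioi (0:ℝ), (d s - u s) = ENNReal.ofReal (1 / 2) := by
    rw [lintegral_sub humeas hJu_ne (ae_of_all _ hule), hJd, hJu]
    exact ENNReal.sub_eq_of_eq_add ENNReal.ofReal_ne_top (by rw [h12])
  have hvle : ∀ s, d s - u s ≤ u s := by
    intro s
    rcases le_total (d s) (ENNReal.ofReal (1 / 2)) with h | h
    · have : u s = d s := min_eq_left h
      rw [this, tsub_self]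
      exact zero_le
    · have hus : u s = ENNReal.ofReal (1 / 2) := min_eq_right h
      rw [hus]
      rw [tsub_le_iff_right, h12]
      exact distrib01_le_one _ _
  have hzero : ∫⁻ s in Set.Ioi (0:ℝ), (u s - (d s - u s)) = 0 := by
    rw [lintegral_sub (g := fun s => d s - u s) (hdmeas.sub humeas)
      (by rw [hsub_int]; exact ENNReal.ofReal_ne_top) (ae_of_all _ hvle), hJu, hsub_int,
      tsub_self]
  have haezero : (fun s => u s - (d s - u s)) =ᵐ[volume.restrict (Set.Ioi (0:ℝ))] 0 :=
    (lintegral_eq_zero_iff (humeas.sub (hdmeas.sub humeas))).1 hzero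
  have hae : ∀ᵐ s ∂(volume.restrict (Set.Ioi (0:ℝ))), d s = 0 ∨ d s = 1 := by
    filter_upwards [haezero] with s hs
    have heq : u s = d s - u s := by
      have h1 : u s ≤ d s - u s := tsub_eq_zero_iff_le.1 hs
      exact le_antisymm h1 (hvle s)
    rcases le_total (d s) (ENNReal.ofReal (1 / 2)) with h | h
    · left
      have hus : u s = d s := min_eq_left h
      rw [hus] at heq
      rw [tsub_self] at heq
      exact heq
    · right
      have hus : u s = ENNReal.ofReal (1 / 2) := min_eq_right h
      rw [hus] at heq
      have := congrArg (· + ENNReal.ofReal (1 / 2)) heq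
      rw [tsub_add_cancel_of_le h] at this
      rw [← this, h12]
  -- extract the constant value
  set P : Set ℝ := {s : ℝ | 0 < s ∧ d s = 1} with hP_def
  have hPbdd : ∀ p ∈ insert (0:ℝ) P, p ≤ 1 := by
    rintro p hp
    rcases hp with rfl | ⟨hp0, hp1⟩
    · norm_num
    · by_contra hp
      push_neg at hp
      have hmono : ∀ s ∈ Set.Ioo (0:ℝ) p, (1:ℝ≥0∞) ≤ d s := by
        intro s hs
        rw [← hp1]
        exact distrib01_anti acplx hs.2.le
      have hge : ENNReal.ofReal p ≤ ∫⁻ s in Set.Ioi (0:ℝ), d s := by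
        calc ENNReal.ofReal p = volume (Set.Ioo (0:ℝ) p) := by rw [Real.volume_Ioo, sub_zero]
          _ = ∫⁻ _ in Set.Ioo (0:ℝ) p, 1 := (setLIntegral_one _).symm
          _ ≤ ∫⁻ s in Set.Ioo (0:ℝ) p, d s := setLIntegral_mono hdmeas hmono
          _ ≤ ∫⁻ s in Set.Ioi (0:ℝ), d s :=
              lintegral_mono_set (fun x hx => hx.1)
      rw [hJd] at hge
      exact absurd (ENNReal.ofReal_le_one.1 hge) (not_le.2 hp)
  have hbddAbove : BddAbove (insert (0:ℝ) P) := ⟨1, hPbdd⟩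
  set c : ℝ := sSup (insert (0:ℝ) P) with hc_def
  have hc0 : 0 ≤ c := le_csSup hbddAbove (mem_insert 0 _)
  have hlt : ∀ s, c < s → d s = 0 := by
    intro s hcs
    have hbad : volume {x : ℝ | ¬(x ∈ Set.Ioi (0:ℝ) → (d x = 0 ∨ d x = 1))} = 0 := by
      have := (ae_restrict_iff' measurableSet_Ioi).1 hae
      exact ae_iff.1 this
    obtain ⟨s', hs'mem, hs'good⟩ : ∃ s' ∈ Set.Ioo c s, (d s' = 0 ∨ d s' = 1) := by
      by_contra hcon
      push_neg at hcon
      have hsub : Set.Ioo c s ⊆ {x : ℝ | ¬(x ∈ Set.Ioi (0:ℝ) → (d x = 0 ∨ d x = 1))} := by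
        intro x hx
        simp only [mem_setOf_eq, Classical.not_imp]
        exact ⟨lt_of_le_of_lt hc0 hx.1, fun h => h.elim (hcon x hx).1 (hcon x hx).2⟩
      have := measure_mono_null hsub hbad
      rw [Real.volume_Ioo] at this
      have hpos : (0:ℝ) < s - c := sub_pos.2 hcs
      rw [ENNReal.ofReal_eq_zero] at this
      linarith
    rcases hs'good with h0 | h1
    · have : d s ≤ d s' := distrib01_anti acplx hs'mem.2.le
      rw [h0] at this
      exact le_antisymm this zero_le
    · exfalso
      have hs'P : s' ∈ P := ⟨lt_of_le_of_lt hc0 hs'mem.1, h1⟩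
      have : s' ≤ c := le_csSup hbddAbove (mem_insert_of_mem _ hs'P)
      exact absurd hs'mem.1 (not_lt.2 this)
  have hge : ∀ s, 0 < s → s < c → d s = 1 := by
    intro s hs0 hsc
    obtain ⟨p, hp, hsp⟩ := exists_lt_of_lt_csSup (insert_nonempty _ _) hsc
    rcases hp with rfl | ⟨hp0, hp1⟩
    · exact absurd hsp (not_lt.2 hs0.le)
    · have h1 : d s ≤ 1 := distrib01_le_one _ _
      have h2 : (1:ℝ≥0∞) ≤ d s := by rw [← hp1]; exact distrib01_anti acplx hsp.le
      exact le_antisymm h1 h2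
  have hcpos : 0 < c := by
    rcases eq_or_lt_of_le hc0 with hc0' | hcpos
    · exfalso
      have hzero' : ∫⁻ s in Set.Ioi (0:ℝ), d s = 0 := by
        rw [setLIntegral_congr_fun measurableSet_Ioi
          (fun s hs => hlt s (hc0' ▸ hs))]
        simp
      rw [hJd] at hzero'
      exact one_ne_zero hzero'
    · exact hcpos
  -- a ≤ c a.e. and a ≥ c a.e.
  have hle1 : m01 {x : ℝ | c < a x} = 0 := by
    have hU : {x : ℝ | c < a x} = ⋃ n : ℕ, {x : ℝ | c + 1 / ((n:ℝ) + 1) < a x} := by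
      ext x
      simp only [mem_setOf_eq, mem_iUnion]
      constructor
      · intro hx
        obtain ⟨n, hn⟩ := exists_nat_one_div_lt (show (0:ℝ) < a x - c by linarith)
        exact ⟨n, by linarith⟩
      · rintro ⟨n, hn⟩
        have : (0:ℝ) < 1 / ((n:ℝ) + 1) := by positivity
        linarith
    rw [hU]
    refine measure_iUnion_null fun n => ?_
    have h1 : (0:ℝ) < 1 / ((n:ℝ) + 1) := by positivity
    have := hlt (c + 1 / ((n:ℝ) + 1)) (by linarith)
    rw [hds] at this
    exact this
  have hnull2 : ∀ s', 0 < s' → s' < c → m01 {x : ℝ | a x ≤ s'} = 0 := by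
    intro s' h0 h1
    have hd1 : m01 {x : ℝ | s' < a x} = 1 := by rw [← hds]; exact hge s' h0 h1
    have hmeas : MeasurableSet {x : ℝ | s' < a x} := measurableSet_lt measurable_const ha
    have hcompl := measure_compl hmeas (lt_of_le_of_lt (m01_le_one _) ENNReal.one_lt_top).ne
    rw [hd1, m01_univ, tsub_self] at hcompl
    have hset : {x : ℝ | a x ≤ s'} = {x : ℝ | s' < a x}ᶜ := by
      ext x; simp [not_lt]
    rw [hset]
    exact hcompl
  have hge1 : m01 {x : ℝ | a x < c} = 0 := by
    have hU : {x : ℝ | a x < c} ⊆ ⋃ n : ℕ, {x : ℝ | a x ≤ max (c - 1/((n:ℝ)+1)) (c/2)} := by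
      intro x hx
      obtain ⟨n, hn⟩ := exists_nat_one_div_lt (show (0:ℝ) < c - a x by
        simp only [mem_setOf_eq] at hx; linarith)
      have hx' : a x < c := hx
      exact mem_iUnion.2 ⟨n, le_trans (by linarith : a x ≤ c - 1/((n:ℝ)+1)) (le_max_left _ _)⟩
    refine measure_mono_null hU (measure_iUnion_null fun n => ?_)
    apply hnull2
    · exact lt_of_lt_of_le (half_pos hcpos) (le_max_right _ _)
    · apply max_lt
      · have : (0:ℝ) < 1/((n:ℝ)+1) := by positivity
        linarith
      · exact half_lt_self hcpos
  have hac : ∀ᵐ x ∂m01, a x = c := by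
    rw [ae_iff]
    refine measure_mono_null ?_ (measure_union_null hge1 hle1)
    intro x hx
    simp only [mem_setOf_eq] at hx ⊢
    rcases lt_or_gt_of_ne hx with h | h
    · exact Or.inl h
    · exact Or.inr h
  -- conclude c = 1
  have hc1 : c = 1 := by
    have hint : ∫⁻ x, ENNReal.ofReal (a x) ∂m01 = ENNReal.ofReal c := by
      rw [lintegral_congr_ae (hac.mono fun x hx => by rw [hx])]
      simp [m01_univ]
    rw [hsum7] at hint
    have := congrArg ENNReal.toReal hint
    rw [ENNReal.toReal_one, ENNReal.toReal_ofReal hc0] at this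
    exact this.symm
  filter_upwards [hac] with x hx
  rw [hx, hc1]

end RenormedL1
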